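/- Let n > 4 be an integer and a, b, c ∈ ℂ with abc ≠ 0. Set e₁ = -((n-2)ab + cn)/(b(n-1)) and e₂ = ac/b. Then the discriminant of f(x) = xⁿ + ax^{n-1} + bx + c equals (-1)^{(n+2)(n-1)/2} · n⁴ · (n-1)^{n-3} · a^{-2} · b^{n-2} · [ ((n-1)a²/n²)² e₂^{n-2} + ((n-1)b/n)² e₂ + ((n-1)b/n)(c - ab/n²) e₁ + (c - ab/n²)² - (1+(-1)ⁿ)·((n-1)a²/n²)·(c - ab/n²)·((e₁/2)² - e₂)^{(n-2)/2} - ((n-1)a²/n²) · Σ_{i=0}^{⌊(n-3)/2⌋} ( 2((n-1)b/n)e₂ + (c - ab/n²)·((n-2)/(n-2-2i))·e₁ ) · C(n-3, 2i) · (e₁/2)^{n-3-2i} · ((e₁/2)² - e₂)^{i} ], where the term with exponent (n-2)/2 is present only when n is even (for n odd its coefficient 1+(-1)ⁿ vanishes, and for n even the exponent (n-2)/2 is an integer). -/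

import Mathlib

open Polynomial Finset


lemma pairprod (n : ℕ) (ξ : Fin n → ℂ) :
    (∏ p ∈ Finset.univ.filter (fun p : Fin n × Fin n => p.1 < p.2), (ξ p.1 - ξ p.2) ^ 2)
      = (-1 : ℂ) ^ (n * (n-1) / 2) * ∏ j : Fin n, ∏ i ∈ Finset.univ.erase j, (ξ j - ξ i) := by
  classical
  set S := Finset.univ.filter (fun p : Fin n × Fin n => p.1 < p.2) with hS
  set T := Finset.univ.filter (fun p : Fin n × Fin n => p.2 < p.1) with hT
  have hDprod : (∏ p ∈ (Finset.univ : Finset (Fin n)).offDiag, (ξ p.1 - ξ p.2))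
      = ∏ j : Fin n, ∏ i ∈ Finset.univ.erase j, (ξ j - ξ i) := by
    have hD : (Finset.univ : Finset (Fin n)).offDiag
        = (Finset.univ ×ˢ Finset.univ).filter (fun p : Fin n × Fin n => p.1 ≠ p.2) := by
      ext p; simp [Finset.mem_offDiag]
    rw [hD, Finset.prod_filter,
      Finset.prod_product' (f := fun i j : Fin n => if i ≠ j then ξ i - ξ j else 1)]
    refine Finset.prod_congr rfl fun j _ => ?_
    rw [← Finset.prod_filter]
    refine Finset.prod_congr ?_ fun _ _ => rfl
    ext i; simp [ne_comm, eq_comm]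
  -- split offDiag into S and T
  have hsplit : (∏ p ∈ (Finset.univ : Finset (Fin n)).offDiag, (ξ p.1 - ξ p.2))
      = (∏ p ∈ S, (ξ p.1 - ξ p.2)) * ∏ p ∈ T, (ξ p.1 - ξ p.2) := by
    rw [← Finset.prod_filter_mul_prod_filter_not ((Finset.univ : Finset (Fin n)).offDiag)
      (fun p => p.1 < p.2)]
    congr 1
    · refine Finset.prod_congr ?_ fun _ _ => rfl
      ext p; simp only [Finset.mem_filter, Finset.mem_offDiag, Finset.mem_univ, true_and, hS]
      constructor
      · rintro ⟨_, h⟩; exact h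
      · intro h; exact ⟨Fin.ne_of_lt h, h⟩
    · refine Finset.prod_congr ?_ fun _ _ => rfl
      ext p; simp only [Finset.mem_filter, Finset.mem_offDiag, Finset.mem_univ, true_and, hT]
      constructor
      · rintro ⟨hne, h⟩
        rcases lt_or_gt_of_ne hne with h' | h'
        · exact absurd h' h
        · exact h'
      · intro h; exact ⟨Fin.ne_of_gt h, not_lt_of_gt h⟩
  have hTS : (∏ p ∈ T, (ξ p.1 - ξ p.2)) = ∏ p ∈ S, (ξ p.2 - ξ p.1) := by
    refine Finset.prod_nbij' Prod.swap Prod.swap ?_ ?_ ?_ ?_ ?_ <;>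
      simp [hS, hT]
  have hcardTS : T.card = S.card := by
    refine Finset.card_nbij' Prod.swap Prod.swap ?_ ?_ ?_ ?_ <;>
      simp [hS, hT, Set.MapsTo, Set.LeftInvOn, Set.RightInvOn]
  have hcardD : ((Finset.univ : Finset (Fin n)).offDiag).card = n * n - n := by
    rw [Finset.offDiag_card]; simp
  have hcardsum : S.card + T.card = n * n - n := by
    rw [← hcardD]
    rw [← Finset.card_union_of_disjoint]
    · congr 1
      ext p
      simp only [Finset.mem_union, hS, hT, Finset.mem_filter, Finset.mem_univ, true_and,
        Finset.mem_offDiag, Fin.lt_def, ne_eq, Fin.ext_iff]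
      omega
    · rw [Finset.disjoint_filter]
      intro p _ h1 h2
      exact absurd h2 (not_lt_of_gt h1)
  have hScard : S.card = n * (n - 1) / 2 := by
    have h1 : n * (n - 1) = n * n - n := by
      rw [Nat.mul_sub, mul_one]
    omega
  rw [hDprod] at hsplit
  rw [hsplit, hTS, ← Finset.prod_mul_distrib]
  have : ∀ p : Fin n × Fin n, (ξ p.1 - ξ p.2) * (ξ p.2 - ξ p.1) = (-1) * (ξ p.1 - ξ p.2)^2 := by
    intro p; ring
  rw [Finset.prod_congr rfl (fun p _ => this p), Finset.prod_mul_distrib,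
    Finset.prod_const, hScard, ← mul_assoc, ← pow_add, ← two_mul]
  rw [pow_mul]
  norm_num

lemma derivative_finset_prod {ι : Type*} [DecidableEq ι] (s : Finset ι) (f : ι → ℂ[X]) :
    derivative (∏ i ∈ s, f i)
      = ∑ i ∈ s, (∏ j ∈ s.erase i, f j) * derivative (f i) := by
  rw [Finset.prod_eq_multiset_prod, derivative_prod, Finset.sum_eq_multiset_sum]
  congr 1

lemma evalderiv (n : ℕ) (ξ : Fin n → ℂ) (j : Fin n) :
    eval (ξ j) (derivative (∏ i : Fin n, (X - C (ξ i))))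
      = ∏ i ∈ Finset.univ.erase j, (ξ j - ξ i) := by
  rw [derivative_finset_prod]
  simp only [derivative_sub, derivative_X, derivative_C, sub_zero, mul_one, eval_finset_sum]
  rw [Finset.sum_eq_single j]
  · simp [eval_prod]
  · intro b _ hb
    rw [eval_prod]
    apply Finset.prod_eq_zero (Finset.mem_erase.mpr ⟨hb.symm, Finset.mem_univ j⟩)
    simp
  · simp

lemma prod_multiset_swap {ι : Type*} (s : Finset ι) (M : Multiset ℂ) (f : ι → ℂ → ℂ) :
    ∏ j ∈ s, (M.map (f j)).prod = (M.map (fun x => ∏ j ∈ s, f j x)).prod := by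
  induction M using Multiset.induction_on with
  | empty => simp
  | cons x M ih =>
    simp only [Multiset.map_cons, Multiset.prod_cons, ← ih, Finset.prod_mul_distrib]

lemma powsum (t s : ℂ) (m : ℕ) :
    (t + s)^m + (t - s)^m
      = 2 * ∑ i ∈ Finset.range (m/2 + 1),
          (Nat.choose m (2*i) : ℂ) * t^(m - 2*i) * (s^2)^i := by
  have h1 : (t + s)^m = ∑ k ∈ Finset.range (m+1), s^k * t^(m-k) * (Nat.choose m k : ℂ) := by
    rw [add_comm]; exact add_pow s t m
  have h2 : (t - s)^m = ∑ k ∈ Finset.range (m+1), (-s)^k * t^(m-k) * (Nat.choose m k : ℂ) := by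
    rw [sub_eq_add_neg, add_comm]; exact add_pow (-s) t m
  rw [h1, h2, ← Finset.sum_add_distrib]
  have h3 : ∀ k ∈ Finset.range (m+1),
      s^k * t^(m-k) * (Nat.choose m k : ℂ) + (-s)^k * t^(m-k) * (Nat.choose m k : ℂ)
        = (1 + (-1:ℂ)^k) * (s^k * t^(m-k) * (Nat.choose m k : ℂ)) := by
    intro k _; rw [neg_pow]; ring
  rw [Finset.sum_congr rfl h3,
    ← Finset.sum_filter_add_sum_filter_not (Finset.range (m+1)) (fun k => Even k)]
  have h4 : ∑ k ∈ (Finset.range (m+1)).filter (fun k => ¬ Even k),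
      (1 + (-1:ℂ)^k) * (s^k * t^(m-k) * (Nat.choose m k : ℂ)) = 0 := by
    apply Finset.sum_eq_zero
    intro k hk
    rw [Finset.mem_filter] at hk
    rw [(Nat.not_even_iff_odd.mp hk.2).neg_one_pow]
    ring
  rw [h4, add_zero, Finset.mul_sum]
  refine Finset.sum_nbij' (fun k => k / 2) (fun i => 2 * i) ?_ ?_ ?_ ?_ ?_
  · intro k hk
    rw [Finset.mem_filter, Finset.mem_range] at hk
    obtain ⟨r, hr⟩ := hk.2
    rw [Finset.mem_range]; omega
  · intro i hi
    rw [Finset.mem_range] at hi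
    rw [Finset.mem_filter, Finset.mem_range]
    exact ⟨by omega, ⟨i, by omega⟩⟩
  · intro k hk
    rw [Finset.mem_filter] at hk
    obtain ⟨r, hr⟩ := hk.2
    omega
  · intro i _; omega
  · intro k hk
    rw [Finset.mem_filter] at hk
    obtain ⟨r, hr⟩ := hk.2
    have hk2 : 2 * (k / 2) = k := by omega
    have hneg : (-1:ℂ)^k = 1 := by
      rw [hr, (by ring : r + r = 2 * r), pow_mul]; norm_num
    have hs : (s^2)^(k/2) = s^k := by rw [← pow_mul, hk2]
    rw [hneg, hs, hk2]
    ring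

lemma choose_div (n i : ℕ) (hn : 4 < n) (hi : i ≤ (n-3)/2) :
    ((n:ℂ) - 2) / ((n:ℂ) - 2 - 2*(i:ℂ)) * (Nat.choose (n-3) (2*i) : ℂ)
      = (Nat.choose (n-2) (2*i) : ℂ) := by
  have hnat : Nat.choose (n-3) (2*i) * (n-2) = Nat.choose (n-2) (2*i) * (n-2-2*i) := by
    have := Nat.choose_mul_succ_eq (n-3) (2*i)
    rw [(by omega : n - 3 + 1 = n - 2)] at this
    exact this
  have hc1 : ((n - 2 : ℕ) : ℂ) = (n:ℂ) - 2 := by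
    push_cast [Nat.cast_sub (by omega : 2 ≤ n)]; ring
  have hc2 : ((n - 2 - 2*i : ℕ) : ℂ) = (n:ℂ) - 2 - 2*(i:ℂ) := by
    push_cast [Nat.cast_sub (by omega : 2*i ≤ n - 2), Nat.cast_sub (by omega : 2 ≤ n)]; ring
  have hD : (n:ℂ) - 2 - 2*(i:ℂ) ≠ 0 := by
    rw [← hc2]
    exact Nat.cast_ne_zero.mpr (by omega)
  rw [div_mul_eq_mul_div, div_eq_iff hD]
  rw [← hc2, ← hc1]
  exact_mod_cast (by rw [Nat.mul_comm]; exact hnat : (n-2) * Nat.choose (n-3) (2*i) = Nat.choose (n-2) (2*i) * (n-2-2*i))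

lemma gfacts (n : ℕ) (hn : 4 < n) (a B C' : ℂ) (ha : a ≠ 0) :
    (C a * X^(n-1) + Polynomial.C B * X + Polynomial.C C' : ℂ[X]).natDegree = n - 1
    ∧ (C a * X^(n-1) + Polynomial.C B * X + Polynomial.C C' : ℂ[X]).leadingCoeff = a := by
  have hd : (C a * X^(n-1) + Polynomial.C B * X + Polynomial.C C' : ℂ[X]).natDegree = n - 1 := by
    compute_degree!
    · rw [if_neg (by omega : ¬ n = 2), if_neg (by omega : ¬ n - 1 = 0)]
      simpa using ha
    · omega
    · omega
  refine ⟨hd, ?_⟩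
  rw [Polynomial.leadingCoeff, hd]
  simp only [coeff_add, coeff_C_mul, coeff_X_pow, coeff_C, coeff_C_mul, coeff_X]
  rw [if_neg (by omega : ¬ 1 = n - 1), if_neg (by omega : ¬ n - 1 = 0)]
  simp

lemma dfacts (n : ℕ) (hn : 4 < n) (a b c : ℂ) :
    derivative (X ^ n + C a * X ^ (n - 1) + C b * X + C c : ℂ[X])
      = Polynomial.C (n:ℂ) * X^(n-1) + Polynomial.C (((n:ℂ)-1)*a) * X^(n-2) + Polynomial.C b := by
  simp only [derivative_add, derivative_X_pow, derivative_mul, derivative_C, derivative_X,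
    zero_mul, mul_one, zero_add, add_zero]
  have h1 : ((n - 1 : ℕ) : ℂ) = (n:ℂ) - 1 := by
    push_cast [Nat.cast_sub (by omega : 1 ≤ n)]; ring
  have h2 : n - 1 - 1 = n - 2 := by omega
  rw [h1, h2, C_mul]
  ring

set_option maxHeartbeats 2000000 in
lemma FIN (N a b c p2 p3 q sp w : ℂ) (hN : N ≠ 0) (hN1 : N - 1 ≠ 0) (ha : a ≠ 0)
    (hb : b ≠ 0) (hc : c ≠ 0) :
    (N-1)^2 * b * a⁻¹ * c⁻¹ *
      (a^2*(a*c*b⁻¹)*q + a*(N-1)*b*(a*c*b⁻¹)*p2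
        + a*N*c*((-(((N-2))*a*b + c*N) * b⁻¹ * (N-1)⁻¹)*p2 - (a*c*b⁻¹)*p3)
        + (N-1)^2*b^2*(a*c*b⁻¹) + (N-1)*N*b*c*(-(((N-2))*a*b + c*N) * b⁻¹ * (N-1)⁻¹) + N^2*c^2)
    = N^4 * a⁻¹^2 *
      (((N-1)*a^2/N^2)^2*q + ((N-1)*b/N)^2*(a*c*b⁻¹)
        + ((N-1)*b/N)*(c - a*b/N^2)*(-(((N-2))*a*b + c*N) * b⁻¹ * (N-1)⁻¹)
        + (c - a*b/N^2)^2
        - (1+w)*((N-1)*a^2/N^2)*(c - a*b/N^2)*sp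
        - ((N-1)*a^2/N^2)*(((N-1)*b/N)*(a*c*b⁻¹)*p3 + (c - a*b/N^2)*(p2 - (1+w)*sp))) := by
  have ra : a * a⁻¹ = 1 := mul_inv_cancel₀ ha
  have rb : b * b⁻¹ = 1 := mul_inv_cancel₀ hb
  have rc : c * c⁻¹ = 1 := mul_inv_cancel₀ hc
  have rN : N * N⁻¹ = 1 := mul_inv_cancel₀ hN
  have rM : (N-1) * (N-1)⁻¹ = 1 := mul_inv_cancel₀ hN1
  linear_combination ((b^3*c*b⁻¹*c⁻¹) + (-1*a*b^2*c*p2*b⁻¹*c⁻¹) + (a^2*b*c*q*b⁻¹*c⁻¹) + (-4*N*b^3*c*b⁻¹*c⁻¹) + (-2*N*b^3*c*b⁻¹*c⁻¹*(N-1)⁻¹) + (-1*N*a*b*c^2*p3*b⁻¹*c⁻¹) + (3*N*a*b^2*c*p2*b⁻¹*c⁻¹) + (2*N*a*b^2*c*p2*b⁻¹*c⁻¹*(N-1)⁻¹) + (-2*N*a^2*b*c*q*b⁻¹*c⁻¹) + (-1*N^2*b*c^2*p2*b⁻¹*c⁻¹*(N-1)⁻¹) + (-2*N^2*b^2*N⁻¹^2)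 + (-2*N^2*b^2*N⁻¹^2*(N-1)⁻¹) + (6*N^2*b^3*c*b⁻¹*c⁻¹) + (7*N^2*b^3*c*b⁻¹*c⁻¹*(N-1)⁻¹) + (2*N^2*a*b*c^2*p3*b⁻¹*c⁻¹) + (-3*N^2*a*b^2*c*p2*b⁻¹*c⁻¹) + (-5*N^2*a*b^2*c*p2*b⁻¹*c⁻¹*(N-1)⁻¹) + (N^2*a^2*b*c*q*b⁻¹*c⁻¹) + (-1*N^3*c*p2*N⁻¹) + (2*N^3*b*c^2*p2*b⁻¹*c⁻¹*(N-1)⁻¹) + (3*N^3*b^2*N⁻¹^2) + (3*N^3*b^2*N⁻¹^2*(N-1)⁻¹) + (-1*N^3*b^2*N⁻¹^3) + (-4*N^3*b^3*c*b⁻¹*c⁻¹) + (-9*N^3*b^3*c*b⁻¹*c⁻¹*(N-1)⁻¹) + (N^3*a*c*p3*N⁻¹^2) + (N^3*a*b*p2*N⁻¹^3) + (-1*N^3*a*b*c^2*p3*b⁻¹*c⁻¹) + (N^3*a*b^2*c*p2*b⁻¹*c⁻¹) + (4*N^3*a*b^2*c*p2*b⁻¹*c⁻¹*(N-1)⁻¹)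 + (-1*N^3*a^2*q*N⁻¹^3) + (N^4*c*p2*N⁻¹) + (2*N^4*b*c*a⁻¹*N⁻¹^2) + (-1*N^4*b*c^2*p2*b⁻¹*c⁻¹*(N-1)⁻¹) + (-1*N^4*b^2*N⁻¹^2) + (-1*N^4*b^2*N⁻¹^2*(N-1)⁻¹) + (2*N^4*b^2*c*a⁻¹*b⁻¹*N⁻¹*(N-1)⁻¹) + (-1*N^4*b^2*c*a⁻¹*b⁻¹*N⁻¹^2) + (N^4*b^3*c*b⁻¹*c⁻¹) + (5*N^4*b^3*c*b⁻¹*c⁻¹*(N-1)⁻¹) + (-2*N^4*a*c*p3*N⁻¹^2) + (-1*N^4*a*c*p2*a⁻¹*N⁻¹^2) + (-1*N^4*a*b*p2*N⁻¹^3) + (-1*N^4*a*b^2*a⁻¹*N⁻¹^4) + (-1*N^4*a*b^2*c*p2*b⁻¹*c⁻¹*(N-1)⁻¹) + (-2*N^4*a*b^3*a⁻¹*b⁻¹*N⁻¹^3*(N-1)⁻¹) + (2*N^4*a^2*q*N⁻¹^3) + (N^4*a^2*b*p2*a⁻¹*N⁻¹^4) + (N^4*a^2*b*c*p3*a⁻¹*b⁻¹*N⁻¹^3)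 + (-1*N^4*a^3*q*a⁻¹*N⁻¹^4) + (-3*N^5*b^2*c*a⁻¹*b⁻¹*N⁻¹*(N-1)⁻¹) + (2*N^5*b^2*c*a⁻¹*b⁻¹*N⁻¹^2) + (N^5*b^2*c*a⁻¹*b⁻¹*N⁻¹^3*(N-1)⁻¹) + (-1*N^5*b^3*c*b⁻¹*c⁻¹*(N-1)⁻¹) + (N^5*a*c*p3*N⁻¹^2) + (N^5*a*c*p2*a⁻¹*N⁻¹^2) + (3*N^5*a*b^3*a⁻¹*b⁻¹*N⁻¹^3*(N-1)⁻¹) + (-1*N^5*a^2*q*N⁻¹^3) + (-1*N^5*a^2*b*p2*a⁻¹*N⁻¹^4) + (-2*N^5*a^2*b*c*p3*a⁻¹*b⁻¹*N⁻¹^3) + (2*N^5*a^3*q*a⁻¹*N⁻¹^4) + (N^6*b^2*c*a⁻¹*b⁻¹*N⁻¹*(N-1)⁻¹) + (-1*N^6*b^2*c*a⁻¹*b⁻¹*N⁻¹^2) + (-1*N^6*b^2*c*a⁻¹*b⁻¹*N⁻¹^3*(N-1)⁻¹) + (-1*N^6*a*b^3*a⁻¹*b⁻¹*N⁻¹^3*(N-1)⁻¹)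 + (N^6*a^2*b*c*p3*a⁻¹*b⁻¹*N⁻¹^3) + (-1*N^6*a^3*q*a⁻¹*N⁻¹^4)) * ra + ((b^2*c*c⁻¹) + (-1*a*b*c*p2*c⁻¹) + (a^2*c*q*c⁻¹) + (-4*N*b^2*c*c⁻¹) + (-2*N*b^2*c*c⁻¹*(N-1)⁻¹) + (-1*N*a*c^2*p3*c⁻¹) + (3*N*a*b*c*p2*c⁻¹) + (2*N*a*b*c*p2*c⁻¹*(N-1)⁻¹) + (-2*N*a^2*c*q*c⁻¹) + (-1*N^2*c^2*p2*c⁻¹*(N-1)⁻¹) + (N^2*b*c^2*a⁻¹*c⁻¹*(N-1)⁻¹) + (6*N^2*b^2*c*c⁻¹) + (7*N^2*b^2*c*c⁻¹*(N-1)⁻¹) + (2*N^2*a*c^2*p3*c⁻¹) + (-3*N^2*a*b*c*p2*c⁻¹) + (-5*N^2*a*b*c*p2*c⁻¹*(N-1)⁻¹) + (N^2*a^2*c*q*c⁻¹) + (2*N^3*c^2*p2*c⁻¹*(N-1)⁻¹) + (-3*N^3*b*c^2*a⁻¹*c⁻¹*(N-1)⁻¹) + (-4*N^3*b^2*c*c⁻¹)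 + (-9*N^3*b^2*c*c⁻¹*(N-1)⁻¹) + (-1*N^3*a*c^2*p3*c⁻¹) + (N^3*a*b*c*p2*c⁻¹) + (4*N^3*a*b*c*p2*c⁻¹*(N-1)⁻¹) + (-1*N^4*c^2*p2*c⁻¹*(N-1)⁻¹) + (2*N^4*b*c*a⁻¹*N⁻¹*(N-1)⁻¹) + (-1*N^4*b*c*a⁻¹*N⁻¹^2) + (3*N^4*b*c^2*a⁻¹*c⁻¹*(N-1)⁻¹) + (N^4*b^2*c*c⁻¹) + (5*N^4*b^2*c*c⁻¹*(N-1)⁻¹) + (-1*N^4*a*b*c*p2*c⁻¹*(N-1)⁻¹) + (-2*N^4*a*b^2*a⁻¹*N⁻¹^3*(N-1)⁻¹) + (N^4*a^2*c*p3*a⁻¹*N⁻¹^3) + (-1*N^5*c^2*a⁻¹^2*N⁻¹*(N-1)⁻¹) + (-3*N^5*b*c*a⁻¹*N⁻¹*(N-1)⁻¹) + (2*N^5*b*c*a⁻¹*N⁻¹^2) + (N^5*b*c*a⁻¹*N⁻¹^3*(N-1)⁻¹) + (-1*N^5*b*c^2*a⁻¹*c⁻¹*(N-1)⁻¹) + (-1*N^5*b^2*c*c⁻¹*(N-1)⁻¹)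 + (3*N^5*a*b^2*a⁻¹*N⁻¹^3*(N-1)⁻¹) + (-2*N^5*a^2*c*p3*a⁻¹*N⁻¹^3) + (N^6*c^2*a⁻¹^2*N⁻¹*(N-1)⁻¹) + (N^6*b*c*a⁻¹*N⁻¹*(N-1)⁻¹) + (-1*N^6*b*c*a⁻¹*N⁻¹^2) + (-1*N^6*b*c*a⁻¹*N⁻¹^3*(N-1)⁻¹) + (-1*N^6*a*b^2*a⁻¹*N⁻¹^3*(N-1)⁻¹) + (N^6*a^2*c*p3*a⁻¹*N⁻¹^3)) * rb + ((b^2) + (-1*a*b*p2) + (a^2*q) + (-4*N*b^2) + (-2*N*b^2*(N-1)⁻¹) + (-1*N*a*c*p3) + (3*N*a*b*p2) + (2*N*a*b*p2*(N-1)⁻¹) + (-2*N*a^2*q) + (-1*N^2*c*p2*(N-1)⁻¹) + (N^2*b*c*a⁻¹) + (N^2*b*c*a⁻¹*(N-1)⁻¹) + (6*N^2*b^2) + (7*N^2*b^2*(N-1)⁻¹) + (2*N^2*a*c*p3) + (-3*N^2*a*b*p2) + (-5*N^2*a*b*p2*(N-1)⁻¹) + (N^2*a^2*q) + (2*N^3*c*p2*(N-1)⁻¹)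 + (-2*N^3*b*c*a⁻¹) + (-3*N^3*b*c*a⁻¹*(N-1)⁻¹) + (-4*N^3*b^2) + (-9*N^3*b^2*(N-1)⁻¹) + (-1*N^3*a*c*p3) + (N^3*a*b*p2) + (4*N^3*a*b*p2*(N-1)⁻¹) + (-1*N^4*c*p2*(N-1)⁻¹) + (N^4*b*c*a⁻¹) + (3*N^4*b*c*a⁻¹*(N-1)⁻¹) + (N^4*b^2) + (5*N^4*b^2*(N-1)⁻¹) + (-1*N^4*a*b*p2*(N-1)⁻¹) + (-1*N^5*b*c*a⁻¹*(N-1)⁻¹) + (-1*N^5*b^2*(N-1)⁻¹)) * rc + ((b*c*a⁻¹) + (b*c*a⁻¹*(N-1)⁻¹) + (b^2*(N-1)⁻¹) + (a*b*p2) + (-1*a^2*q) + (-1*N*b*c*a⁻¹*(N-1)⁻¹) + (2*N*b^2) + (-1*N*b^2*(N-1)⁻¹) + (-3*N*b^2*N⁻¹) + (-2*N*b^2*N⁻¹*(N-1)⁻¹) + (N*a*c*p3) + (-1*N*a*b*p2) + (N*a*b*p2*N⁻¹) + (2*N*a^2*q) + (-1*N*a^2*q*N⁻¹) + (-1*N^2*c*p2)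 + (N^2*b*c*a⁻¹*N⁻¹) + (N^2*b*c*a⁻¹*N⁻¹*(N-1)⁻¹) + (-1*N^2*b^2) + (3*N^2*b^2*N⁻¹) + (3*N^2*b^2*N⁻¹*(N-1)⁻¹) + (-1*N^2*b^2*N⁻¹^2) + (-2*N^2*a*c*p3) + (N^2*a*c*p3*N⁻¹) + (-1*N^2*a*b*p2*N⁻¹) + (N^2*a*b*p2*N⁻¹^2) + (-1*N^2*a^2*q) + (2*N^2*a^2*q*N⁻¹) + (-1*N^2*a^2*q*N⁻¹^2) + (N^3*c*p2) + (2*N^3*b*c*a⁻¹) + (2*N^3*b*c*a⁻¹*(N-1)⁻¹) + (-1*N^3*b*c*a⁻¹*N⁻¹*(N-1)⁻¹) + (-1*N^3*b^2*N⁻¹) + (-1*N^3*b^2*N⁻¹*(N-1)⁻¹) + (N^3*a*c*p3) + (-2*N^3*a*c*p3*N⁻¹) + (-1*N^3*a*c*p2*a⁻¹*N⁻¹) + (-1*N^3*a*b*p2*N⁻¹^2) + (-2*N^3*a*b^2*a⁻¹*N⁻¹^2*(N-1)⁻¹) + (-1*N^3*a*b^2*a⁻¹*N⁻¹^3) + (-1*N^3*a^2*q*N⁻¹)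 + (2*N^3*a^2*q*N⁻¹^2) + (N^3*a^2*c*p3*a⁻¹*N⁻¹^2) + (N^3*a^2*b*p2*a⁻¹*N⁻¹^3) + (-1*N^3*a^3*q*a⁻¹*N⁻¹^3) + (-1*N^4*c^2*a⁻¹^2*(N-1)⁻¹) + (-1*N^4*b*c*a⁻¹) + (-3*N^4*b*c*a⁻¹*(N-1)⁻¹) + (2*N^4*b*c*a⁻¹*N⁻¹) + (N^4*b*c*a⁻¹*N⁻¹^2*(N-1)⁻¹) + (N^4*a*c*p3*N⁻¹) + (N^4*a*c*p2*a⁻¹*N⁻¹) + (3*N^4*a*b^2*a⁻¹*N⁻¹^2*(N-1)⁻¹) + (-1*N^4*a^2*q*N⁻¹^2) + (-2*N^4*a^2*c*p3*a⁻¹*N⁻¹^2) + (-1*N^4*a^2*b*p2*a⁻¹*N⁻¹^3) + (2*N^4*a^3*q*a⁻¹*N⁻¹^3) + (N^5*c^2*a⁻¹^2*(N-1)⁻¹) + (N^5*b*c*a⁻¹*(N-1)⁻¹) + (-1*N^5*b*c*a⁻¹*N⁻¹) + (-1*N^5*b*c*a⁻¹*N⁻¹^2*(N-1)⁻¹) +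 (-1*N^5*a*b^2*a⁻¹*N⁻¹^2*(N-1)⁻¹) + (N^5*a^2*c*p3*a⁻¹*N⁻¹^2) + (-1*N^5*a^3*q*a⁻¹*N⁻¹^3)) * rN + ((-1*b*c*a⁻¹) + (-1*b^2) + (N*b*c*a⁻¹*N⁻¹) + (2*N*b^2) + (3*N*b^2*N⁻¹) + (-2*N*a*b*p2) + (N^2*c*p2) + (-1*N^2*b*c*a⁻¹) + (-1*N^2*b*c*a⁻¹*N⁻¹) + (-5*N^2*b^2) + (-1*N^2*b^2*N⁻¹) + (3*N^2*a*b*p2) + (-2*N^2*a*b^2*a⁻¹*N⁻¹^2) + (-1*N^3*c*p2) + (N^3*b*c*a⁻¹*N⁻¹^2) + (4*N^3*b^2) + (-1*N^3*a*b*p2) + (3*N^3*a*b^2*a⁻¹*N⁻¹^2) + (N^4*c^2*a⁻¹^2) + (-1*N^4*b*c*a⁻¹*N⁻¹^2) + (-1*N^4*b^2) + (-1*N^4*a*b^2*a⁻¹*N⁻¹^2)) * rM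



set_option maxHeartbeats 2000000 in
/-- **Discriminant of `x^n + a x^{n-1} + b x + c`** (Theorem 4.1).
For a monic polynomial `f` over `ℂ` with roots `ξ₁, …, ξ_n` (with multiplicity),
the discriminant is `∏_{i<j} (ξ i - ξ j)^2`. -/
theorem discriminant_quadrinomial_x_pow_n_add_ax_pow_n_sub_one_add_bx
    (n : ℕ) (hn : 4 < n) (a b c : ℂ) (habc : a * b * c ≠ 0)
    (e₁ e₂ : ℂ)
    (he₁ : e₁ = -(((n : ℂ) - 2) * a * b + c * (n : ℂ)) / (b * ((n : ℂ) - 1)))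
    (he₂ : e₂ = a * c / b)
    (ξ : Fin n → ℂ)
    (hf : (X ^ n + C a * X ^ (n - 1) + C b * X + C c : ℂ[X])
        = ∏ i : Fin n, (X - C (ξ i))) :
    (∏ p ∈ Finset.univ.filter (fun p : Fin n × Fin n => p.1 < p.2),
        (ξ p.1 - ξ p.2) ^ 2)
      = (-1 : ℂ) ^ ((n + 2) * (n - 1) / 2) * (n : ℂ) ^ 4
          * ((n : ℂ) - 1) ^ (n - 3) * a⁻¹ ^ 2 * b ^ (n - 2)
          * ((((n : ℂ) - 1) * a ^ 2 / (n : ℂ) ^ 2) ^ 2 * e₂ ^ (n - 2)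
            + (((n : ℂ) - 1) * b / (n : ℂ)) ^ 2 * e₂
            + (((n : ℂ) - 1) * b / (n : ℂ)) * (c - a * b / (n : ℂ) ^ 2) * e₁
            + (c - a * b / (n : ℂ) ^ 2) ^ 2
            - (1 + (-1 : ℂ) ^ n) * (((n : ℂ) - 1) * a ^ 2 / (n : ℂ) ^ 2)
                * (c - a * b / (n : ℂ) ^ 2)
                * ((e₁ / 2) ^ 2 - e₂) ^ ((n - 2) / 2)
            - (((n : ℂ) - 1) * a ^ 2 / (n : ℂ) ^ 2)
                * ∑ i ∈ Finset.range ((n - 3) / 2 + 1),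
                    (2 * (((n : ℂ) - 1) * b / (n : ℂ)) * e₂
                      + (c - a * b / (n : ℂ) ^ 2)
                          * (((n : ℂ) - 2) / ((n : ℂ) - 2 - 2 * (i : ℂ))) * e₁)
                      * (Nat.choose (n - 3) (2 * i) : ℂ)
                      * (e₁ / 2) ^ (n - 3 - 2 * i)
                      * ((e₁ / 2) ^ 2 - e₂) ^ i) := by
  classical
  have ha : a ≠ 0 := fun h => habc (by simp [h])
  have hb : b ≠ 0 := fun h => habc (by simp [h])
  have hc : c ≠ 0 := fun h => habc (by simp [h])
  have hN : (n : ℂ) ≠ 0 := Nat.cast_ne_zero.mpr (by omega)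
  have hN1 : (n : ℂ) - 1 ≠ 0 := by
    have h1 : ((n:ℕ):ℂ) ≠ ((1:ℕ):ℂ) := fun h => (by omega : n ≠ 1) (Nat.cast_injective h)
    simpa [sub_ne_zero] using h1
  -- roots of f
  have froot : ∀ j, (ξ j)^n + a*(ξ j)^(n-1) + b*(ξ j) + c = 0 := by
    intro j
    have h := congrArg (eval (ξ j)) hf
    simp only [eval_add, eval_mul, eval_pow, eval_X, eval_C, eval_prod, eval_sub] at h
    rw [h]
    exact Finset.prod_eq_zero (Finset.mem_univ j) (by simp)
  have hneg2 : (-1:ℂ)^n * (-1:ℂ)^n = 1 := by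
    rw [← pow_add]
    exact Even.neg_one_pow ⟨n, by ring⟩
  have hprodξ : (∏ j, ξ j) = (-1:ℂ)^n * c := by
    have h := congrArg (eval 0) hf
    simp only [eval_add, eval_mul, eval_pow, eval_X, eval_C, eval_prod, eval_sub] at h
    rw [zero_pow (by omega : n ≠ 0), zero_pow (by omega : n - 1 ≠ 0)] at h
    have h2 : (∏ i, ((0:ℂ) - ξ i)) = (-1:ℂ)^n * ∏ i, ξ i := by
      rw [Finset.prod_congr rfl (fun i _ => (by ring : (0:ℂ) - ξ i = (-1) * ξ i)),
        Finset.prod_mul_distrib, Finset.prod_const, Finset.card_univ, Fintype.card_fin]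
    rw [h2] at h
    norm_num at h
    rw [h, ← mul_assoc, hneg2, one_mul]
  -- the derivative product
  set D1 := ∏ j, eval (ξ j) (derivative (X ^ n + C a * X ^ (n - 1) + C b * X + C c : ℂ[X]))
    with hD1def
  have hLHS : (∏ p ∈ Finset.univ.filter (fun p : Fin n × Fin n => p.1 < p.2),
      (ξ p.1 - ξ p.2) ^ 2) = (-1:ℂ)^(n*(n-1)/2) * D1 := by
    rw [pairprod]
    congr 1
    rw [hD1def]
    refine (Finset.prod_congr rfl fun j _ => ?_).symm
    rw [hf, evalderiv]
  -- x * f'(x) at roots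
  have hfd : ∀ j, eval (ξ j) (derivative (X ^ n + C a * X ^ (n - 1) + C b * X + C c : ℂ[X]))
      * (ξ j) = -(a*(ξ j)^(n-1) + ((n:ℂ)-1)*b*(ξ j) + (n:ℂ)*c) := by
    intro j
    rw [dfacts n hn a b c]
    simp only [eval_add, eval_mul, eval_pow, eval_X, eval_C]
    have h := froot j
    have hp1 : (ξ j)^(n-1) = (ξ j)^(n-2) * ξ j := by
      rw [← pow_succ]; congr 1; omega
    have hp2 : (ξ j)^n = (ξ j)^(n-2) * ξ j * ξ j := by
      rw [mul_assoc, ← sq, ← pow_add]; congr 1; omega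
    rw [hp1] at h ⊢
    rw [hp2] at h
    linear_combination (n:ℂ) * h
  -- product over roots of f of g-values
  have hGv : D1 * ((-1:ℂ)^n * c)
      = (-1:ℂ)^n * ∏ j, (a*(ξ j)^(n-1) + ((n:ℂ)-1)*b*(ξ j) + (n:ℂ)*c) := by
    rw [← hprodξ, hD1def, ← Finset.prod_mul_distrib,
      Finset.prod_congr rfl (fun j _ => hfd j),
      Finset.prod_congr rfl (fun j (_ : j ∈ Finset.univ) =>
        (by ring : -(a*(ξ j)^(n-1) + ((n:ℂ)-1)*b*(ξ j) + (n:ℂ)*c)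
          = (-1) * (a*(ξ j)^(n-1) + ((n:ℂ)-1)*b*(ξ j) + (n:ℂ)*c))),
      Finset.prod_mul_distrib, Finset.prod_const, Finset.card_univ, Fintype.card_fin]
  have hD1c : D1 * c = ∏ j, (a*(ξ j)^(n-1) + ((n:ℂ)-1)*b*(ξ j) + (n:ℂ)*c) := by
    have h := congrArg (fun z => (-1:ℂ)^n * z) hGv
    calc D1 * c = (-1:ℂ)^n * (D1 * ((-1:ℂ)^n * c)) := by
          rw [show (-1:ℂ)^n * (D1 * ((-1:ℂ)^n * c)) = ((-1:ℂ)^n * (-1:ℂ)^n) * (D1 * c) by ring,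
            hneg2, one_mul]
      _ = (-1:ℂ)^n * ((-1:ℂ)^n * ∏ j, (a*(ξ j)^(n-1) + ((n:ℂ)-1)*b*(ξ j) + (n:ℂ)*c)) := by
          rw [hGv]
      _ = _ := by rw [← mul_assoc, hneg2, one_mul]
  -- the auxiliary polynomial g
  set g : ℂ[X] := C a * X^(n-1) + C (((n:ℂ)-1)*b) * X + C ((n:ℂ)*c) with hgdef
  obtain ⟨hdeg, hlead⟩ := gfacts n hn a (((n:ℂ)-1)*b) ((n:ℂ)*c) ha
  have hg0 : g ≠ 0 := by
    intro h
    rw [hgdef] at h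
    rw [h] at hlead
    simp only [leadingCoeff_zero] at hlead
    exact ha hlead.symm
  have hsplits : Splits g := IsAlgClosed.splits g
  have hcard : Multiset.card g.roots = n - 1 := by
    have h := hsplits.natDegree_eq_card_roots
    rw [← h, hgdef, hdeg]
  have hfact : g = C a * (g.roots.map fun r => X - C r).prod := by
    have h := hsplits.eq_prod_roots
    rwa [show g.leadingCoeff = a from hlead] at h
  have hgroot : ∀ r ∈ g.roots, a * r^(n-1) + ((n:ℂ)-1)*b*r + (n:ℂ)*c = 0 := by
    intro r hr
    have h := (Polynomial.mem_roots'.mp hr).2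
    rw [Polynomial.IsRoot, hgdef] at h
    simpa [eval_add, eval_mul, eval_pow, mul_assoc] using h
  -- quadratic roots u, v
  obtain ⟨u, hu⟩ : ∃ u : ℂ, ((X^2 - C e₁ * X + C e₂ : ℂ[X])).IsRoot u := by
    apply Complex.exists_root
    have h2 : (X^2 - C e₁ * X + C e₂ : ℂ[X]).degree = 2 := by compute_degree!
    rw [h2]; norm_num
  have hu' : u^2 - e₁*u + e₂ = 0 := by
    simpa [Polynomial.IsRoot] using hu
  set v := e₁ - u with hvdef
  have hsum : u + v = e₁ := by rw [hvdef]; ring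
  have huv : u * v = e₂ := by rw [hvdef]; linear_combination -hu'
  set s := u - e₁/2 with hsdef
  have hs2 : s^2 = (e₁/2)^2 - e₂ := by rw [hsdef]; linear_combination hu'
  have hueq : u = e₁/2 + s := by rw [hsdef]; ring
  have hveq : v = e₁/2 - s := by rw [hvdef, hsdef]; ring
  -- the value of f at roots of g (cleared of denominators)
  have hfr : ∀ r ∈ g.roots, a * (r^n + a*r^(n-1) + b*r + c)
      = (-(((n:ℂ)-1)*b)) * ((r-u)*(r-v)) := by
    intro r hr
    have h := hgroot r hr
    have hp : r^n = r^(n-1) * r := by rw [← pow_succ]; congr 1; omega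
    have hquad : (r-u)*(r-v) = r^2 - e₁*r + e₂ := by
      rw [← hsum, ← huv]; ring
    rw [hp, hquad, he₁, he₂]
    field_simp
    linear_combination (r+a) * h
  -- value of f as a product
  have hfx : ∀ x : ℂ, (∏ j, (x - ξ j)) = x^n + a*x^(n-1) + b*x + c := by
    intro x
    have h := congrArg (eval x) hf
    simp only [eval_add, eval_mul, eval_pow, eval_X, eval_C, eval_prod, eval_sub] at h
    rw [← h]
  -- evaluation of g via its factorization
  have hevalg : ∀ x : ℂ, eval x g = a * ((g.roots.map fun r => x - r).prod) := by
    intro x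
    conv_lhs => rw [hfact]
    rw [eval_mul, eval_C, eval_multiset_prod, Multiset.map_map]
    simp [Function.comp]
  have hevalg' : ∀ x : ℂ, eval x g = a*x^(n-1) + ((n:ℂ)-1)*b*x + (n:ℂ)*c := by
    intro x
    rw [hgdef]
    simp only [eval_add, eval_mul, eval_pow, eval_X, eval_C]
  have heven : ((-1:ℂ)^n)^(n-1) = 1 := by
    rw [← pow_mul]
    apply Even.neg_one_pow
    rcases Nat.even_or_odd n with h | h
    · exact h.mul_right _
    · exact (Nat.Odd.sub_odd h odd_one).mul_left _
  -- step 1 : D1 * c = a^n * prod of f over roots of g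
  have hstep1 : D1 * c = a^n * ((g.roots.map fun r => r^n + a*r^(n-1) + b*r + c).prod) := by
    rw [hD1c]
    rw [Finset.prod_congr rfl (fun j (_ : j ∈ Finset.univ) => by
      rw [← hevalg' (ξ j), hevalg (ξ j)])]
    rw [Finset.prod_mul_distrib, Finset.prod_const, Finset.card_univ, Fintype.card_fin]
    rw [prod_multiset_swap]
    congr 1
    have hmapeq : (g.roots.map fun x => ∏ j, (ξ j - x))
        = g.roots.map fun x => (-1:ℂ)^n * (x^n + a*x^(n-1) + b*x + c) := by
      apply Multiset.map_congr rfl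
      intro x _
      rw [← hfx x]
      rw [Finset.prod_congr rfl (fun j (_ : j ∈ Finset.univ) =>
        (by ring : ξ j - x = (-1) * (x - ξ j))),
        Finset.prod_mul_distrib, Finset.prod_const, Finset.card_univ, Fintype.card_fin]
    rw [hmapeq]
    rw [show (fun x => (-1:ℂ)^n * (x^n + a*x^(n-1) + b*x + c))
        = fun x => (fun _ => (-1:ℂ)^n) x * (fun x => x^n + a*x^(n-1) + b*x + c) x from rfl]
    rw [Multiset.prod_map_mul, Multiset.map_const', Multiset.prod_replicate, hcard, heven,
      one_mul]
  -- step 2 : factor f-values through the quadratic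
  have hstep2 : a^(n-1) * ((g.roots.map fun r => r^n + a*r^(n-1) + b*r + c).prod)
      = (-(((n:ℂ)-1)*b))^(n-1) * ((g.roots.map fun r => r - u).prod)
          * ((g.roots.map fun r => r - v).prod) := by
    rw [show a^(n-1) = a^(Multiset.card g.roots) by rw [hcard], ← Multiset.prod_replicate,
      ← Multiset.map_const' g.roots a, ← Multiset.prod_map_mul]
    rw [Multiset.map_congr rfl (fun r hr => hfr r hr)]
    rw [show (fun r => -(((n:ℂ)-1)*b) * ((r-u)*(r-v)))
        = fun r => (fun _ => -(((n:ℂ)-1)*b)) r * ((fun r => r - u) r * (fun r => r - v) r)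
        from rfl]
    rw [Multiset.prod_map_mul, Multiset.map_const', Multiset.prod_replicate, hcard]
    rw [Multiset.prod_map_mul]
    ring
  -- step 3 : the linear-factor products give evaluations of g
  have hPuv : ∀ w : ℂ, a * ((g.roots.map fun r => r - w).prod)
      = (-1:ℂ)^(n-1) * (a*w^(n-1) + ((n:ℂ)-1)*b*w + (n:ℂ)*c) := by
    intro w
    rw [← hevalg' w, hevalg w]
    rw [Multiset.map_congr rfl (fun r (_ : r ∈ g.roots) =>
      (by ring : r - w = (-1) * (w - r)))]
    rw [show (fun r => (-1:ℂ) * (w - r)) = fun r => (fun _ => (-1:ℂ)) r * (fun r => w - r) r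
      from rfl]
    rw [Multiset.prod_map_mul, Multiset.map_const', Multiset.prod_replicate, hcard]
    ring
  -- KEY equation
  have hKEY : D1 * c * a^(n+1)
      = (-1:ℂ)^(n-1) * a^n * ((((n:ℂ)-1)*b)^(n-1)
          * ((-1:ℂ)^(n-1) * (a*u^(n-1) + ((n:ℂ)-1)*b*u + (n:ℂ)*c))
          * ((-1:ℂ)^(n-1) * (a*v^(n-1) + ((n:ℂ)-1)*b*v + (n:ℂ)*c))) := by
    rw [← hPuv u, ← hPuv v]
    have hexp : a^(n+1) = a^(n-1) * a^2 := by rw [← pow_add]; congr 1; omega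
    rw [hexp, show D1 * c * (a^(n-1) * a^2) = (D1 * c) * a^(n-1) * a^2 by ring, hstep1]
    rw [show a ^ n * (Multiset.map (fun r => r ^ n + a * r ^ (n - 1) + b * r + c) g.roots).prod
        * a^(n-1) * a^2
        = a ^ n * (a^(n-1) * (Multiset.map (fun r => r ^ n + a * r ^ (n - 1) + b * r + c)
            g.roots).prod) * a^2 by ring, hstep2]
    rw [show (-(((n:ℂ)-1)*b))^(n-1) = (-1:ℂ)^(n-1) * (((n:ℂ)-1)*b)^(n-1) by
      rw [← neg_pow]]
    ring
  set Gu := a*u^(n-1) + ((n:ℂ)-1)*b*u + (n:ℂ)*c with hGudef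
  set Gv := a*v^(n-1) + ((n:ℂ)-1)*b*v + (n:ℂ)*c with hGvdef
  set p2 := u^(n-2) + v^(n-2) with hp2def
  set p3 := u^(n-3) + v^(n-3) with hp3def
  have hGuv : Gu * Gv = a^2*e₂*e₂^(n-2) + a*((n:ℂ)-1)*b*e₂*p2
      + a*(n:ℂ)*c*(e₁*p2 - e₂*p3) + ((n:ℂ)-1)^2*b^2*e₂ + ((n:ℂ)-1)*(n:ℂ)*b*c*e₁
      + (n:ℂ)^2*c^2 := by
    have hu1 : u^(n-1) = u^(n-3) * u^2 := by rw [← pow_add]; congr 1; omega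
    have hv1 : v^(n-1) = v^(n-3) * v^2 := by rw [← pow_add]; congr 1; omega
    have hu2 : u^(n-2) = u^(n-3) * u := by rw [← pow_succ]; congr 1; omega
    have hv2 : v^(n-2) = v^(n-3) * v := by rw [← pow_succ]; congr 1; omega
    have hq : e₂^(n-2) = (u^(n-3)*u) * (v^(n-3)*v) := by
      rw [← huv, mul_pow, hu2, hv2]
    rw [hGudef, hGvdef, hp2def, hp3def, hu1, hv1, hu2, hv2, hq, ← hsum, ← huv]
    ring
  -- power sums as binomial sums
  have hT3 : 2 * (∑ i ∈ Finset.range ((n-3)/2 + 1), (Nat.choose (n-3) (2*i) : ℂ)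
      * (e₁/2)^(n-3-2*i) * ((e₁/2)^2 - e₂)^i) = p3 := by
    have h := powsum (e₁/2) s (n-3)
    rw [← hueq, ← hveq, hs2] at h
    rw [hp3def, h]
  have hT2' : p2 = 2 * (∑ i ∈ Finset.range ((n-2)/2 + 1), (Nat.choose (n-2) (2*i) : ℂ)
      * (e₁/2)^(n-2-2*i) * ((e₁/2)^2 - e₂)^i) := by
    have h := powsum (e₁/2) s (n-2)
    rw [← hueq, ← hveq, hs2] at h
    rw [hp2def, h]
  have hT2 : (1 + (-1:ℂ)^n) * ((e₁/2)^2 - e₂)^((n-2)/2)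
      + 2 * (∑ i ∈ Finset.range ((n-3)/2 + 1), (Nat.choose (n-2) (2*i) : ℂ)
          * (e₁/2)^(n-2-2*i) * ((e₁/2)^2 - e₂)^i) = p2 := by
    rcases Nat.even_or_odd n with he | ho
    · have hw : (-1:ℂ)^n = 1 := he.neg_one_pow
      have hrange : (n-2)/2 + 1 = ((n-3)/2 + 1) + 1 := by
        obtain ⟨k, hk⟩ := he; omega
      rw [hrange, Finset.sum_range_succ] at hT2'
      have h2 : 2 * ((n-3)/2 + 1) = n - 2 := by obtain ⟨k, hk⟩ := he; omega
      rw [h2, Nat.choose_self, Nat.sub_self] at hT2'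
      have h3 : (n-2)/2 = (n-3)/2 + 1 := by obtain ⟨k, hk⟩ := he; omega
      rw [hw, h3]
      rw [hT2']
      push_cast
      ring
    · have hw : (-1:ℂ)^n = -1 := ho.neg_one_pow
      have hrange : (n-2)/2 = (n-3)/2 := by obtain ⟨k, hk⟩ := ho; omega
      rw [hrange] at hT2'
      rw [hw, hT2']
      ring
  have hnegm : (-1:ℂ)^(n-1) * (-1:ℂ)^(n-1) = 1 := by
    rw [← pow_add]
    exact Even.neg_one_pow ⟨n-1, by ring⟩
  have hKEY2 : D1 * c * a^(n+1)
      = (-1:ℂ)^(n-1) * a^n * (((n:ℂ)-1)*b)^(n-1) * (Gu * Gv) := by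
    rw [hKEY]
    linear_combination ((-1:ℂ)^(n-1) * a^n * (((n:ℂ)-1)*b)^(n-1) * Gu * Gv) * hnegm
  have hD1val : D1 = (-1:ℂ)^(n-1) * ((n:ℂ)-1)^(n-1) * b^(n-1) * a⁻¹ * c⁻¹ * (Gu * Gv) := by
    apply mul_right_cancel₀ (show c * a^(n+1) ≠ 0 from mul_ne_zero hc (pow_ne_zero _ ha))
    rw [show D1 * (c * a^(n+1)) = D1 * c * a^(n+1) by ring, hKEY2,
      mul_pow ((n:ℂ)-1) b (n-1), show a^(n+1) = a^n * a by rw [pow_succ]]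
    field_simp
  have hsign : (-1:ℂ)^((n+2)*(n-1)/2) = (-1:ℂ)^(n*(n-1)/2) * (-1:ℂ)^(n-1) := by
    rw [← pow_add]
    congr 1
    have h2 : (n+2)*(n-1) = n*(n-1) + 2*(n-1) := by rw [Nat.add_mul]
    have h3 : Even (n*(n-1)) := by
      rcases Nat.even_or_odd n with h | h
      · exact h.mul_right _
      · exact (Nat.Odd.sub_odd h odd_one).mul_left _
    obtain ⟨k, hk⟩ := h3
    omega
  have hX3 : (∑ i ∈ Finset.range ((n-3)/2 + 1), (Nat.choose (n-3) (2*i) : ℂ)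
      * (e₁/2)^(n-3-2*i) * ((e₁/2)^2 - e₂)^i) = p3 / 2 := by
    rw [← hT3]; ring
  have hX2 : (∑ i ∈ Finset.range ((n-3)/2 + 1), (Nat.choose (n-2) (2*i) : ℂ)
      * (e₁/2)^(n-2-2*i) * ((e₁/2)^2 - e₂)^i)
      = (p2 - (1 + (-1:ℂ)^n) * ((e₁/2)^2 - e₂)^((n-2)/2)) / 2 := by
    rw [← hT2]; ring
  have hsplit0 : (∑ i ∈ Finset.range ((n - 3) / 2 + 1),
        (2 * (((n : ℂ) - 1) * b / (n : ℂ)) * e₂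
          + (c - a * b / (n : ℂ) ^ 2)
              * (((n : ℂ) - 2) / ((n : ℂ) - 2 - 2 * (i : ℂ))) * e₁)
          * (Nat.choose (n - 3) (2 * i) : ℂ)
          * (e₁ / 2) ^ (n - 3 - 2 * i)
          * ((e₁ / 2) ^ 2 - e₂) ^ i)
      = 2 * ((((n:ℂ)-1) * b / (n:ℂ)) * e₂) * (∑ i ∈ Finset.range ((n-3)/2 + 1),
            (Nat.choose (n-3) (2*i) : ℂ) * (e₁/2)^(n-3-2*i) * ((e₁/2)^2 - e₂)^i)
        + 2 * (c - a * b / (n:ℂ)^2) * (∑ i ∈ Finset.range ((n-3)/2 + 1),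
            (Nat.choose (n-2) (2*i) : ℂ) * (e₁/2)^(n-2-2*i) * ((e₁/2)^2 - e₂)^i) := by
    rw [Finset.mul_sum, Finset.mul_sum, ← Finset.sum_add_distrib]
    apply Finset.sum_congr rfl
    intro i hi
    have hi' : i ≤ (n-3)/2 := by rw [Finset.mem_range] at hi; omega
    have hcd := choose_div n i hn hi'
    have hpow : (e₁/2)^(n-2-2*i) = (e₁/2)^(n-3-2*i) * (e₁/2) := by
      rw [← pow_succ]; congr 1; omega
    rw [hpow, ← hcd]
    ring
  have hsplitsum : (∑ i ∈ Finset.range ((n - 3) / 2 + 1),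
        (2 * (((n : ℂ) - 1) * b / (n : ℂ)) * e₂
          + (c - a * b / (n : ℂ) ^ 2)
              * (((n : ℂ) - 2) / ((n : ℂ) - 2 - 2 * (i : ℂ))) * e₁)
          * (Nat.choose (n - 3) (2 * i) : ℂ)
          * (e₁ / 2) ^ (n - 3 - 2 * i)
          * ((e₁ / 2) ^ 2 - e₂) ^ i)
      = (((n:ℂ)-1) * b / (n:ℂ)) * e₂ * p3
        + (c - a * b / (n:ℂ)^2)
            * (p2 - (1 + (-1:ℂ)^n) * ((e₁/2)^2 - e₂)^((n-2)/2)) := by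
    rw [hsplit0, hX3, hX2]
    ring
  have h3 : ((n:ℂ)-1)^2 * b * a⁻¹ * c⁻¹ * (Gu * Gv)
      = (n:ℂ)^4 * a⁻¹^2
          * ((((n : ℂ) - 1) * a ^ 2 / (n : ℂ) ^ 2) ^ 2 * e₂ ^ (n - 2)
            + (((n : ℂ) - 1) * b / (n : ℂ)) ^ 2 * e₂
            + (((n : ℂ) - 1) * b / (n : ℂ)) * (c - a * b / (n : ℂ) ^ 2) * e₁
            + (c - a * b / (n : ℂ) ^ 2) ^ 2
            - (1 + (-1 : ℂ) ^ n) * (((n : ℂ) - 1) * a ^ 2 / (n : ℂ) ^ 2)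
                * (c - a * b / (n : ℂ) ^ 2)
                * ((e₁ / 2) ^ 2 - e₂) ^ ((n - 2) / 2)
            - (((n : ℂ) - 1) * a ^ 2 / (n : ℂ) ^ 2)
                * ∑ i ∈ Finset.range ((n - 3) / 2 + 1),
                    (2 * (((n : ℂ) - 1) * b / (n : ℂ)) * e₂
                      + (c - a * b / (n : ℂ) ^ 2)
                          * (((n : ℂ) - 2) / ((n : ℂ) - 2 - 2 * (i : ℂ))) * e₁)
                      * (Nat.choose (n - 3) (2 * i) : ℂ)
                      * (e₁ / 2) ^ (n - 3 - 2 * i)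
                      * ((e₁ / 2) ^ 2 - e₂) ^ i) := by
    rw [hGuv, hsplitsum]
    clear_value p2 p3
    generalize e₂^(n-2) = q
    generalize ((e₁/2)^2 - e₂)^((n-2)/2) = sp
    generalize (-1:ℂ)^n = w
    have he₁' : e₁ = -(((n:ℂ)-2)*a*b + c*(n:ℂ)) * b⁻¹ * ((n:ℂ)-1)⁻¹ := by
      rw [he₁, div_eq_mul_inv, mul_inv]; ring
    have he₂' : e₂ = a*c*b⁻¹ := by rw [he₂, div_eq_mul_inv]
    rw [he₁', he₂']
    linear_combination FIN ((n:ℂ)) a b c p2 p3 q sp w hN hN1 ha hb hc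
  rw [hLHS, hD1val, hsign]
  rw [show ((n:ℂ)-1)^(n-1) = ((n:ℂ)-1)^(n-3) * ((n:ℂ)-1)^2 by rw [← pow_add]; congr 1; omega,
    show b^(n-1) = b^(n-2) * b by rw [← pow_succ]; congr 1; omega]
  linear_combination ((-1:ℂ)^(n*(n-1)/2) * (-1:ℂ)^(n-1) * ((n:ℂ)-1)^(n-3) * b^(n-2)) * h3
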